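/- In a two-terminal series-parallel graph, for any two distinct s-t flows f and f̃ of the same value, there exists an (f, f̃)-good pair of subgraphs, i.e., subgraphs H₁, H₂ whose parallel join is a node of the decomposition tree, with f_e ≥ f̃_e on all edges of H₁, f_e ≤ f̃_e on all edges of H₂, val(f_{H₁}) > val(f̃_{H₁}), and val(f_{H₂}) < val(f̃_{H₂}). -/
import Mathlib


/-- Two-terminal series-parallel graphs, given by their binary decomposition tree. -/
inductive SPG : Type
  | edge : SPG
  | series : SPG → SPG → SPG
  | parallel : SPG → SPG → SPG

namespace SPG

/-- The edge set of a series-parallel graph (the leaves of the decomposition tree). -/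
def E : SPG → Type
  | .edge => Unit
  | .series a b => a.E ⊕ b.E
  | .parallel a b => a.E ⊕ b.E

/-- The value (between the two terminals) of an edge vector on a series-parallel graph. -/
def val : (G : SPG) → (G.E → ℝ) → ℝ
  | .edge, f => f ()
  | .series a _, f => a.val (f ∘ Sum.inl)
  | .parallel a b, f => a.val (f ∘ Sum.inl) + b.val (f ∘ Sum.inr)

/-- `f` is an `s`-`t` flow on the series-parallel graph `G`: it is nonnegative and
satisfies flow conservation (in a series join both parts carry the same value). -/
def IsFlow : (G : SPG) → (G.E → ℝ) → Prop
  | .edge, f => 0 ≤ f ()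
  | .series a b, f => a.IsFlow (f ∘ Sum.inl) ∧ b.IsFlow (f ∘ Sum.inr) ∧
      a.val (f ∘ Sum.inl) = b.val (f ∘ Sum.inr)
  | .parallel a b, f => a.IsFlow (f ∘ Sum.inl) ∧ b.IsFlow (f ∘ Sum.inr)

/-- There is an `(f, f̃)`-good pair of subgraphs of `G`: two subgraphs `H₁`, `H₂`
whose parallel join is a node of the decomposition tree, with `f ≥ f̃` edgewise on
`H₁`, `f ≤ f̃` edgewise on `H₂`, `val(f_{H₁}) > val(f̃_{H₁})` and
`val(f_{H₂}) < val(f̃_{H₂})`. -/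
def GoodPair : (G : SPG) → (G.E → ℝ) → (G.E → ℝ) → Prop
  | .edge, _, _ => False
  | .series a b, f, g =>
      a.GoodPair (f ∘ Sum.inl) (g ∘ Sum.inl) ∨ b.GoodPair (f ∘ Sum.inr) (g ∘ Sum.inr)
  | .parallel a b, f, g =>
      a.GoodPair (f ∘ Sum.inl) (g ∘ Sum.inl) ∨ b.GoodPair (f ∘ Sum.inr) (g ∘ Sum.inr) ∨
      ((∀ e, g (Sum.inl e) ≤ f (Sum.inl e)) ∧ (∀ e, f (Sum.inr e) ≤ g (Sum.inr e)) ∧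
        a.val (g ∘ Sum.inl) < a.val (f ∘ Sum.inl) ∧ b.val (f ∘ Sum.inr) < b.val (g ∘ Sum.inr)) ∨
      ((∀ e, g (Sum.inr e) ≤ f (Sum.inr e)) ∧ (∀ e, f (Sum.inl e) ≤ g (Sum.inl e)) ∧
        b.val (g ∘ Sum.inr) < b.val (f ∘ Sum.inr) ∧ a.val (f ∘ Sum.inl) < a.val (g ∘ Sum.inl))

end SPG

/-- Trichotomy: for distinct flows, either a good pair exists, or one flow
dominates the other edgewise with strictly larger value. -/
theorem spg_trichotomy (G : SPG) (f g : G.E → ℝ) (hf : G.IsFlow f) (hg : G.IsFlow g)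
    (hne : f ≠ g) :
    G.GoodPair f g ∨
    ((∀ e, g e ≤ f e) ∧ G.val g < G.val f) ∨
    ((∀ e, f e ≤ g e) ∧ G.val f < G.val g) := by
  induction G with
  | edge =>
    have h : f () ≠ g () := fun h => hne (funext fun e => by cases e; exact h)
    rcases lt_trichotomy (f ()) (g ()) with h' | h' | h'
    · exact Or.inr (Or.inr ⟨fun e => by cases e; exact h'.le, h'⟩)
    · exact absurd h' h
    · exact Or.inr (Or.inl ⟨fun e => by cases e; exact h'.le, h'⟩)
  | series a b iha ihb =>
    obtain ⟨hfa, hfb, hfv⟩ := hf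
    obtain ⟨hga, hgb, hgv⟩ := hg
    by_cases hA : f ∘ Sum.inl = g ∘ Sum.inl
    · have hB : f ∘ Sum.inr ≠ g ∘ Sum.inr := by
        intro hB
        exact hne (funext fun e => by
          cases e with
          | inl x => exact congrFun hA x
          | inr x => exact congrFun hB x)
      have hAv : a.val (f ∘ Sum.inl) = a.val (g ∘ Sum.inl) := by rw [hA]
      rcases ihb _ _ hfb hgb hB with h | ⟨hd, hv⟩ | ⟨hd, hv⟩
      · exact Or.inl (Or.inr h)
      · refine Or.inr (Or.inl ⟨fun e => ?_, ?_⟩)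
        · cases e with
          | inl x => exact (congrFun hA x).ge
          | inr x => exact hd x
        · show a.val (g ∘ Sum.inl) < a.val (f ∘ Sum.inl)
          linarith
      · refine Or.inr (Or.inr ⟨fun e => ?_, ?_⟩)
        · cases e with
          | inl x => exact (congrFun hA x).le
          | inr x => exact hd x
        · show a.val (f ∘ Sum.inl) < a.val (g ∘ Sum.inl)
          linarith
    · rcases iha _ _ hfa hga hA with h | ⟨hda, hva⟩ | ⟨hda, hva⟩
      · exact Or.inl (Or.inl h)
      · by_cases hB : f ∘ Sum.inr = g ∘ Sum.inr
        · exfalso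
          have hBv : b.val (f ∘ Sum.inr) = b.val (g ∘ Sum.inr) := by rw [hB]
          linarith
        · rcases ihb _ _ hfb hgb hB with h | ⟨hdb, hvb⟩ | ⟨hdb, hvb⟩
          · exact Or.inl (Or.inr h)
          · refine Or.inr (Or.inl ⟨fun e => ?_, ?_⟩)
            · cases e with
              | inl x => exact hda x
              | inr x => exact hdb x
            · exact hva
          · exfalso; linarith
      · by_cases hB : f ∘ Sum.inr = g ∘ Sum.inr
        · exfalso
          have hBv : b.val (f ∘ Sum.inr) = b.val (g ∘ Sum.inr) := by rw [hB]
          linarith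
        · rcases ihb _ _ hfb hgb hB with h | ⟨hdb, hvb⟩ | ⟨hdb, hvb⟩
          · exact Or.inl (Or.inr h)
          · exfalso; linarith
          · refine Or.inr (Or.inr ⟨fun e => ?_, ?_⟩)
            · cases e with
              | inl x => exact hda x
              | inr x => exact hdb x
            · exact hva
  | parallel a b iha ihb =>
    obtain ⟨hfa, hfb⟩ := hf
    obtain ⟨hga, hgb⟩ := hg
    by_cases hA : f ∘ Sum.inl = g ∘ Sum.inl
    · have hB : f ∘ Sum.inr ≠ g ∘ Sum.inr := by
        intro hB
        exact hne (funext fun e => by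
          cases e with
          | inl x => exact congrFun hA x
          | inr x => exact congrFun hB x)
      have hAv : a.val (f ∘ Sum.inl) = a.val (g ∘ Sum.inl) := by rw [hA]
      rcases ihb _ _ hfb hgb hB with h | ⟨hd, hv⟩ | ⟨hd, hv⟩
      · exact Or.inl (Or.inr (Or.inl h))
      · refine Or.inr (Or.inl ⟨fun e => ?_, ?_⟩)
        · cases e with
          | inl x => exact (congrFun hA x).ge
          | inr x => exact hd x
        · show a.val (g ∘ Sum.inl) + b.val (g ∘ Sum.inr) <
            a.val (f ∘ Sum.inl) + b.val (f ∘ Sum.inr)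
          linarith
      · refine Or.inr (Or.inr ⟨fun e => ?_, ?_⟩)
        · cases e with
          | inl x => exact (congrFun hA x).le
          | inr x => exact hd x
        · show a.val (f ∘ Sum.inl) + b.val (f ∘ Sum.inr) <
            a.val (g ∘ Sum.inl) + b.val (g ∘ Sum.inr)
          linarith
    · rcases iha _ _ hfa hga hA with h | ⟨hda, hva⟩ | ⟨hda, hva⟩
      · exact Or.inl (Or.inl h)
      · by_cases hB : f ∘ Sum.inr = g ∘ Sum.inr
        · have hBv : b.val (f ∘ Sum.inr) = b.val (g ∘ Sum.inr) := by rw [hB]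
          refine Or.inr (Or.inl ⟨fun e => ?_, ?_⟩)
          · cases e with
            | inl x => exact hda x
            | inr x => exact (congrFun hB x).ge
          · show a.val (g ∘ Sum.inl) + b.val (g ∘ Sum.inr) <
              a.val (f ∘ Sum.inl) + b.val (f ∘ Sum.inr)
            linarith
        · rcases ihb _ _ hfb hgb hB with h | ⟨hdb, hvb⟩ | ⟨hdb, hvb⟩
          · exact Or.inl (Or.inr (Or.inl h))
          · refine Or.inr (Or.inl ⟨fun e => ?_, ?_⟩)
            · cases e with
              | inl x => exact hda x
              | inr x => exact hdb x
            · show a.val (g ∘ Sum.inl) + b.val (g ∘ Sum.inr) <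
                a.val (f ∘ Sum.inl) + b.val (f ∘ Sum.inr)
              linarith
          · exact Or.inl (Or.inr (Or.inr (Or.inl ⟨hda, hdb, hva, hvb⟩)))
      · by_cases hB : f ∘ Sum.inr = g ∘ Sum.inr
        · have hBv : b.val (f ∘ Sum.inr) = b.val (g ∘ Sum.inr) := by rw [hB]
          refine Or.inr (Or.inr ⟨fun e => ?_, ?_⟩)
          · cases e with
            | inl x => exact hda x
            | inr x => exact (congrFun hB x).le
          · show a.val (f ∘ Sum.inl) + b.val (f ∘ Sum.inr) <
              a.val (g ∘ Sum.inl) + b.val (g ∘ Sum.inr)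
            linarith
        · rcases ihb _ _ hfb hgb hB with h | ⟨hdb, hvb⟩ | ⟨hdb, hvb⟩
          · exact Or.inl (Or.inr (Or.inl h))
          · exact Or.inl (Or.inr (Or.inr (Or.inr ⟨hdb, hda, hvb, hva⟩)))
          · refine Or.inr (Or.inr ⟨fun e => ?_, ?_⟩)
            · cases e with
              | inl x => exact hda x
              | inr x => exact hdb x
            · show a.val (f ∘ Sum.inl) + b.val (f ∘ Sum.inr) <
                a.val (g ∘ Sum.inl) + b.val (g ∘ Sum.inr)
              linarith

/-- Lemma 5.2: any two distinct `s`-`t` flows of the same value on a series-parallel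
graph admit an `(f, f̃)`-good pair of subgraphs. -/
theorem spg_good_pair_exists (G : SPG) (f ft : G.E → ℝ)
    (hf : G.IsFlow f) (hft : G.IsFlow ft)
    (hval : G.val f = G.val ft) (hne : f ≠ ft) :
    G.GoodPair f ft := by
  rcases spg_trichotomy G f ft hf hft hne with h | ⟨_, hv⟩ | ⟨_, hv⟩
  · exact h
  · exact absurd hval (by linarith)
  · exact absurd hval (by linarith)
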